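/- Let α = 23/6, β = 23/15, and T > 0. Let e, e' ⊆ R be distinct sets, each minimal for threshold T/α with all elements of value less than T/α, and suppose e ∩ e' ≠ ∅. If min_{j ∈ e ∪ e'} v_j > (1/2)·T/α, then each of the three sets e \ e', e ∩ e', and e' \ e contains exactly one element, and ∑_{j ∈ e ∪ e'} min{1/3, β·v_j/T} ≤ 1. -/

import Mathlib

/-- Let `α = 23/6`, `β = 23/15` and `T > 0`.  Let `e, e'` be distinct sets, each
minimal for threshold `T/α` with all elements of value `< T/α`, and suppose
`e ∩ e' ≠ ∅`.  If the minimum value of a resource in `e ∪ e'` is greater than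
`(1/2) * T/α`, then each of `e \ e'`, `e ∩ e'` and `e' \ e` contains exactly
one element, and `∑_{j ∈ e ∪ e'} min (1/3) (β * v j / T) ≤ 1`. -/
theorem santa_claus_single_blocker_large_min
    {R : Type*} [DecidableEq R]
    (v : R → ℝ) (hv : ∀ j, 0 < v j) (T : ℝ) (hT : 0 < T)
    (e e' : Finset R) (hne : e ≠ e')
    (he_min : T / (23 / 6) ≤ ∑ j ∈ e, v j ∧
      ∀ S ⊂ e, ∑ j ∈ S, v j < T / (23 / 6))
    (he'_min : T / (23 / 6) ≤ ∑ j ∈ e', v j ∧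
      ∀ S ⊂ e', ∑ j ∈ S, v j < T / (23 / 6))
    (he_thin : ∀ j ∈ e, v j < T / (23 / 6))
    (he'_thin : ∀ j ∈ e', v j < T / (23 / 6))
    (hint : (e ∩ e').Nonempty)
    (hmin : (1 / 2) * (T / (23 / 6)) <
      (e ∪ e').inf'
        (hint.mono (Finset.inter_subset_left.trans Finset.subset_union_left)) v) :
    (e \ e').card = 1 ∧ (e ∩ e').card = 1 ∧ (e' \ e).card = 1 ∧
      ∑ j ∈ e ∪ e', min (1 / 3) ((23 / 15) * v j / T) ≤ 1 := by
  set c := T / (23 / 6) with hc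
  have hcpos : 0 < c := by positivity
  -- every element of e ∪ e' has value > c/2
  have hbig : ∀ j ∈ e ∪ e', (1/2) * c < v j := fun j hj =>
    lt_of_lt_of_le hmin (Finset.inf'_le v hj)
  -- a set of the given kind has cardinality 2
  have key : ∀ f : Finset R, (c ≤ ∑ j ∈ f, v j) → (∀ S ⊂ f, ∑ j ∈ S, v j < c) →
      (∀ j ∈ f, v j < c) → (∀ j ∈ f, (1/2) * c < v j) → f.card = 2 := by
    intro f hsum hmin' hthin hb
    have h2 : 2 ≤ f.card := by
      by_contra h
      push_neg at h
      interval_cases hcard : f.card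
      · rw [Finset.card_eq_zero] at hcard
        simp [hcard] at hsum; linarith
      · rw [Finset.card_eq_one] at hcard
        obtain ⟨a, rfl⟩ := hcard
        simp at hsum
        exact absurd hsum (not_le.2 (hthin a (by simp)))
    by_contra h
    have h3 : 3 ≤ f.card := by omega
    obtain ⟨S, hSsub, hScard⟩ := Finset.exists_subset_card_eq (s := f) (n := 2) (by omega)
    have hSss : S ⊂ f := hSsub.ssubset_of_ne (by
      intro hEq; rw [hEq] at hScard; omega)
    have hlt : ∑ j ∈ S, v j < c := hmin' S hSss
    have hge : (S.card : ℝ) * ((1/2) * c) ≤ ∑ j ∈ S, v j := by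
      calc (S.card : ℝ) * ((1/2) * c) = ∑ _j ∈ S, (1/2) * c := by
            rw [Finset.sum_const, nsmul_eq_mul]
        _ ≤ ∑ j ∈ S, v j :=
            Finset.sum_le_sum fun j hj => le_of_lt (hb j (hSsub hj))
    rw [hScard] at hge
    push_cast at hge
    linarith
  have hecard : e.card = 2 := key e he_min.1 he_min.2 he_thin
    (fun j hj => hbig j (Finset.mem_union_left _ hj))
  have he'card : e'.card = 2 := key e' he'_min.1 he'_min.2 he'_thin
    (fun j hj => hbig j (Finset.mem_union_right _ hj))
  have hintcard : (e ∩ e').card = 1 := by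
    have h1 : 1 ≤ (e ∩ e').card := Finset.card_pos.2 hint
    have h2 : (e ∩ e').card ≤ 2 := hecard ▸ Finset.card_le_card Finset.inter_subset_left
    rcases Nat.lt_or_ge (e ∩ e').card 2 with h | h
    · omega
    · exfalso
      have he1 : e ∩ e' = e := Finset.eq_of_subset_of_card_le Finset.inter_subset_left
        (by omega)
      have he2 : e ∩ e' = e' := Finset.eq_of_subset_of_card_le Finset.inter_subset_right
        (by omega)
      exact hne (he1 ▸ he2)
  have hd1 : (e \ e').card = 1 := by
    have := Finset.card_sdiff_add_card_inter e e'
    omega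
  have hd2 : (e' \ e).card = 1 := by
    have := Finset.card_sdiff_add_card_inter e' e
    rw [Finset.inter_comm] at this
    omega
  refine ⟨hd1, hintcard, hd2, ?_⟩
  have hucard : (e ∪ e').card = 3 := by
    have := Finset.card_union_add_card_inter e e'
    omega
  calc ∑ j ∈ e ∪ e', min (1 / 3) ((23 / 15) * v j / T)
      ≤ ∑ _j ∈ e ∪ e', (1/3 : ℝ) := Finset.sum_le_sum fun j _ => min_le_left _ _
    _ = 1 := by rw [Finset.sum_const, hucard]; norm_num
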